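/- Let 1 ≤ p < ∞, R, T > 0, N ≥ 1 an integer, f : ℝ^N × ℝ^N → ℝ^N a C^1 function, and fix r ∈ [0,R]. Then the map 𝒯(·,·,r) : C([−R,T],ℝ^N) × C([−R,0],ℝ^N) → W^{1,p}([−R,T],ℝ^N) is continuously Fréchet differentiable with Fréchet derivative D_{y,φ}𝒯(y,φ,r) = A_{y,φ,r}, where [A_{y,φ,r}(η,χ)](t) = 0 for t ∈ [−R,0] and [A_{y,φ,r}(η,χ)](t) = ∫_0^t Df((y+φ̄)(s),(y+φ̄)(s−r))((η+χ̄)(s),(η+χ̄)(s−r)) ds for t ∈ [0,T]. Moreover the operator-norm estimate ‖A_{y,φ,r} − A_{y_0,φ_0,r}‖ ≤ 2 T^{1/p} sup_{t∈[0,T]} ‖Df((y+φ̄)(t),(y+φ̄)(t−r)) − Df((y_0+φ̄_0)(t),(y_0+φ̄_0)(t−r))‖ holds. -/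

import Mathlib

open MeasureTheory Set ENNReal

noncomputable section

/-- `ℝ^N` with a fixed norm (the Euclidean one). -/
abbrev Vec (N : ℕ) : Type := EuclideanSpace ℝ (Fin N)

/-- `x ∈ W^{1,p}([a,b],ℝ^N)`: `x` is absolutely continuous on `[a,b]` (equivalently, it is the
integral of its almost-everywhere derivative `x'`), and `x' ∈ L^p([a,b],ℝ^N)`. -/
def HasW1pOn {N : ℕ} (x x' : ℝ → Vec N) (p a b : ℝ) : Prop :=
  (∀ t ∈ Set.Icc a b, x t = x a + ∫ s in a..t, x' s) ∧
    IntervalIntegrable x' volume a b ∧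
    MemLp x' (ENNReal.ofReal p) (volume.restrict (Set.Icc a b))

/-- The `W^{1,p}[a,b]`-norm, computed from the value `v = x a` at the left endpoint and the
almost-everywhere derivative `d = x'`:  `(|x(a)|^p + ∫_a^b |x'|^p)^(1/p)`. -/
def wNorm {N : ℕ} (p a b : ℝ) (v : Vec N) (d : ℝ → Vec N) : ℝ :=
  (‖v‖ ^ p + ∫ t in a..b, ‖d t‖ ^ p) ^ (1 / p)

/-- The supremum norm `‖x‖_{C[a,b]}`. -/
def cNorm {N : ℕ} (a b : ℝ) (x : ℝ → Vec N) : ℝ :=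
  sSup ((fun t => ‖x t‖) '' Set.Icc a b)

/-- The static prolongation `φ̄` of `φ : [−R,0] → ℝ^N`. -/
def prolong {N : ℕ} (φ : ℝ → Vec N) : ℝ → Vec N := fun t => if t ≤ 0 then φ t else φ 0

/-- `ρ(y,φ,r,t) = ((y+φ̄)(t), (y+φ̄)(t−r)) ∈ ℝ^N × ℝ^N`. -/
def rho {N : ℕ} (y φ : ℝ → Vec N) (r t : ℝ) : Vec N × Vec N :=
  ((y + prolong φ) t, (y + prolong φ) (t - r))

/-- `𝒯(y,φ,r)(t) = 0` for `t ≤ 0` and `= ∫_0^t f((y+φ̄)(s),(y+φ̄)(s−r)) ds` for `t ∈ [0,T]`. -/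
def Tmap {N : ℕ} (f : Vec N × Vec N → Vec N) (y φ : ℝ → Vec N) (r : ℝ) : ℝ → Vec N :=
  fun t => if t ≤ 0 then 0
    else ∫ s in (0:ℝ)..t, f ((y + prolong φ) s, (y + prolong φ) (s - r))

/-- The almost-everywhere derivative of `𝒯(y,φ,r)`. -/
def Tderiv {N : ℕ} (f : Vec N × Vec N → Vec N) (y φ : ℝ → Vec N) (r : ℝ) : ℝ → Vec N :=
  fun t => if t ≤ 0 then 0 else f ((y + prolong φ) t, (y + prolong φ) (t - r))

/-- `[A_{y,φ,r}(η,χ)](t) = 0` for `t ≤ 0` and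
`= ∫_0^t Df((y+φ̄)(s),(y+φ̄)(s−r)) ((η+χ̄)(s),(η+χ̄)(s−r)) ds` for `t ∈ [0,T]`. -/
def Afun {N : ℕ} (f : Vec N × Vec N → Vec N) (y φ η χ : ℝ → Vec N) (r : ℝ) : ℝ → Vec N :=
  fun t => if t ≤ 0 then 0 else ∫ s in (0:ℝ)..t, fderiv ℝ f (rho y φ r s) (rho η χ r s)

/-- The almost-everywhere derivative of `A_{y,φ,r}(η,χ)`. -/
def Afun' {N : ℕ} (f : Vec N × Vec N → Vec N) (y φ η χ : ℝ → Vec N) (r : ℝ) : ℝ → Vec N :=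
  fun t => if t ≤ 0 then 0 else fderiv ℝ f (rho y φ r t) (rho η χ r t)

section Helpers

variable {N : ℕ}

lemma prolong_apply (φ : ℝ → Vec N) (t : ℝ) : prolong φ t = φ (min t 0) := by
  by_cases h : t ≤ 0
  · rw [prolong, if_pos h, min_eq_left h]
  · rw [prolong, if_neg h, min_eq_right (not_le.mp h).le]

lemma prolong_add (φ χ : ℝ → Vec N) : prolong (φ + χ) = prolong φ + prolong χ := by
  funext t
  simp only [prolong, Pi.add_apply]
  split_ifs <;> rfl

lemma prolong_sub (φ χ : ℝ → Vec N) : prolong (φ - χ) = prolong φ - prolong χ := by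
  funext t
  simp only [prolong, Pi.sub_apply]
  split_ifs <;> rfl

lemma continuousOn_prolong {R : ℝ} (hR : 0 ≤ R) {φ : ℝ → Vec N}
    (hφ : ContinuousOn φ (Icc (-R) 0)) : ContinuousOn (prolong φ) (Ici (-R)) := by
  have h : prolong φ = fun t => φ (min t 0) := funext (prolong_apply φ)
  rw [h]
  exact hφ.comp ((continuous_id.min continuous_const).continuousOn)
    (fun t ht => ⟨le_min ht (by linarith), min_le_right _ _⟩)

lemma continuousOn_addProlong {R T : ℝ} (hR : 0 ≤ R) {y φ : ℝ → Vec N}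
    (hy : ContinuousOn y (Icc (-R) T)) (hφ : ContinuousOn φ (Icc (-R) 0)) :
    ContinuousOn (y + prolong φ) (Icc (-R) T) :=
  hy.add ((continuousOn_prolong hR hφ).mono (fun t ht => ht.1))

lemma continuousOn_rho {R T r : ℝ} (hR : 0 < R) (hT : 0 < T) (hr : r ∈ Icc (0:ℝ) R)
    {y φ : ℝ → Vec N} (hy : ContinuousOn y (Icc (-R) T)) (hφ : ContinuousOn φ (Icc (-R) 0)) :
    ContinuousOn (rho y φ r) (Icc 0 T) := by
  have hu := continuousOn_addProlong hR.le hy hφ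
  unfold rho
  refine ContinuousOn.prodMk (hu.mono (Icc_subset_Icc (by linarith) le_rfl)) ?_
  refine hu.comp ((continuous_id.sub continuous_const).continuousOn) (fun t ht => ?_)
  constructor
  · show -R ≤ id t - r
    have := ht.1; have := hr.2; simp only [id_eq]; linarith
  · show id t - r ≤ T
    have := ht.2; have := hr.1; simp only [id_eq]; linarith

lemma rho_add (y φ η χ : ℝ → Vec N) (r t : ℝ) :
    rho (y + η) (φ + χ) r t = rho y φ r t + rho η χ r t := by
  simp only [rho, prolong_add, Prod.mk_add_mk, Prod.ext_iff, Pi.add_apply]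
  constructor <;> abel

lemma rho_sub (y φ η χ : ℝ → Vec N) (r t : ℝ) :
    rho y φ r t - rho η χ r t = rho (y - η) (φ - χ) r t := by
  simp only [rho, prolong_sub, Prod.mk_sub_mk, Prod.ext_iff, Pi.sub_apply, Pi.add_apply]
  constructor <;> abel

lemma norm_le_cNorm {a b : ℝ} (hab : a ≤ b) {x : ℝ → Vec N} (hx : ContinuousOn x (Icc a b))
    {t : ℝ} (ht : t ∈ Icc a b) : ‖x t‖ ≤ cNorm a b x :=
  le_csSup (isCompact_Icc.bddAbove_image hx.norm) ⟨t, ht, rfl⟩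

lemma cNorm_nonneg {a b : ℝ} (hab : a ≤ b) {x : ℝ → Vec N} (hx : ContinuousOn x (Icc a b)) :
    0 ≤ cNorm a b x :=
  le_trans (norm_nonneg (x a)) (norm_le_cNorm hab hx ⟨le_rfl, hab⟩)

lemma norm_rho_le {R T r : ℝ} (hR : 0 < R) (hT : 0 < T) (hr : r ∈ Icc (0:ℝ) R)
    {η χ : ℝ → Vec N} (hη : ContinuousOn η (Icc (-R) T)) (hχ : ContinuousOn χ (Icc (-R) 0))
    {t : ℝ} (ht : t ∈ Icc (0:ℝ) T) :
    ‖rho η χ r t‖ ≤ cNorm (-R) T η + cNorm (-R) 0 χ := by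
  have hRT : (-R:ℝ) ≤ T := by linarith [ht.1, ht.2]
  have hR0 : (-R:ℝ) ≤ 0 := by linarith
  have key : ∀ s ∈ Icc (-R) T, ‖(η + prolong χ) s‖ ≤ cNorm (-R) T η + cNorm (-R) 0 χ := by
    intro s hs
    refine le_trans (norm_add_le _ _) (add_le_add (norm_le_cNorm hRT hη hs) ?_)
    rw [prolong_apply]
    exact norm_le_cNorm hR0 hχ ⟨le_min hs.1 hR0, min_le_right _ _⟩
  rw [rho, Prod.norm_def]
  refine max_le (key t ⟨by linarith [ht.1], ht.2⟩) (key (t - r) ?_)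
  exact ⟨by have := ht.1; have := hr.2; linarith, by have := ht.1; have := hr.1; linarith [ht.2]⟩

lemma aesm_piece {R T : ℝ} (hR : 0 < R) (hT : 0 < T) {g : ℝ → Vec N}
    (hg : ContinuousOn g (Icc 0 T)) :
    AEStronglyMeasurable (fun t => if t ≤ 0 then (0 : Vec N) else g t)
      (volume.restrict (Icc (-R) T)) := by
  have hsplit : Icc (-R:ℝ) T = Icc (-R) 0 ∪ Ioc 0 T :=
    (Set.Icc_union_Ioc_eq_Icc (by linarith) hT.le).symm
  have hdisj : Disjoint (Icc (-R:ℝ) 0) (Ioc (0:ℝ) T) :=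
    Set.disjoint_left.mpr (fun t ht1 ht2 => absurd ht1.2 (not_le.mpr ht2.1))
  rw [hsplit, Measure.restrict_union hdisj measurableSet_Ioc]
  refine AEStronglyMeasurable.add_measure ?_ ?_
  · refine (aestronglyMeasurable_const (b := (0:Vec N))).congr ?_
    refine (ae_restrict_iff' measurableSet_Icc).mpr (ae_of_all _ (fun t ht => ?_))
    simp [if_pos ht.2]
  · refine ((hg.mono Ioc_subset_Icc_self).aestronglyMeasurable measurableSet_Ioc).congr ?_
    refine (ae_restrict_iff' measurableSet_Ioc).mpr (ae_of_all _ (fun t ht => ?_))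
    simp [if_neg (not_le.mpr ht.1)]

end Helpers
section Helpers2

variable {N : ℕ}

lemma wNorm_le {R T p M : ℝ} (hp : 1 ≤ p) (hR : 0 < R) (hT : 0 < T) (hM : 0 ≤ M)
    {v : Vec N} (hv : v = 0) {d : ℝ → Vec N} (hd0 : ∀ t ≤ (0:ℝ), d t = 0)
    (hdm : AEStronglyMeasurable d (volume.restrict (Icc (-R) T)))
    (hdb : ∀ t ∈ Ioc (0:ℝ) T, ‖d t‖ ≤ M) :
    wNorm p (-R) T v d ≤ T ^ (1/p) * M := by
  have hp0 : (0:ℝ) < p := lt_of_lt_of_le one_pos hp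
  have hRT : (-R:ℝ) ≤ T := by linarith
  subst hv
  rw [wNorm, norm_zero, Real.zero_rpow hp0.ne', zero_add]
  haveI : IsFiniteMeasure (volume.restrict (Icc (-R:ℝ) T)) :=
    ⟨by rw [Measure.restrict_apply_univ]; exact measure_Icc_lt_top⟩
  set h : ℝ → ℝ := fun t => if t ≤ 0 then 0 else M ^ p with hh
  have hMp : (0:ℝ) ≤ M ^ p := Real.rpow_nonneg hM p
  -- integrability of ‖d‖^p
  have hdmn : AEStronglyMeasurable (fun t => ‖d t‖ ^ p) (volume.restrict (Icc (-R) T)) := by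
    exact (Real.continuous_rpow_const hp0.le).comp_aestronglyMeasurable hdm.norm
  have hdbd : ∀ t ∈ Icc (-R:ℝ) T, ‖d t‖ ^ p ≤ M ^ p := by
    intro t ht
    by_cases hle : t ≤ 0
    · rw [hd0 t hle, norm_zero, Real.zero_rpow hp0.ne']; exact hMp
    · exact Real.rpow_le_rpow (norm_nonneg _) (hdb t ⟨not_le.mp hle, ht.2⟩) hp0.le
  have hint_d : IntervalIntegrable (fun t => ‖d t‖ ^ p) volume (-R) T := by
    rw [intervalIntegrable_iff_integrableOn_Icc_of_le hRT]
    refine ⟨hdmn, HasFiniteIntegral.of_bounded (C := M ^ p) ?_⟩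
    refine (ae_restrict_iff' measurableSet_Icc).mpr (ae_of_all _ (fun t ht => ?_))
    rw [Real.norm_eq_abs, abs_of_nonneg (Real.rpow_nonneg (norm_nonneg _) p)]
    exact hdbd t ht
  have hhm : AEStronglyMeasurable h (volume.restrict (Icc (-R) T)) := by
    exact (Measurable.ite measurableSet_Iic measurable_const
      measurable_const).aestronglyMeasurable
  have hint_h : IntervalIntegrable h volume (-R) T := by
    rw [intervalIntegrable_iff_integrableOn_Icc_of_le hRT]
    refine ⟨hhm, HasFiniteIntegral.of_bounded (C := M ^ p) ?_⟩
    refine (ae_restrict_iff' measurableSet_Icc).mpr (ae_of_all _ (fun t _ => ?_))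
    rw [hh]
    by_cases hle : t ≤ 0
    · simp [if_pos hle, hMp]
    · simp [if_neg hle, abs_of_nonneg hMp]
  have hmono : (∫ t in (-R)..T, ‖d t‖ ^ p) ≤ ∫ t in (-R)..T, h t := by
    refine intervalIntegral.integral_mono_on hRT hint_d hint_h (fun t ht => ?_)
    by_cases hle : t ≤ 0
    · rw [hd0 t hle, norm_zero, Real.zero_rpow hp0.ne', hh]; simp [if_pos hle]
    · rw [hh]; simpa [if_neg hle] using hdbd t ht
  have hval : (∫ t in (-R)..T, h t) = T * M ^ p := by
    have i1 : IntervalIntegrable h volume (-R) 0 := by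
      refine hint_h.mono_set ?_
      rw [Set.uIcc_of_le (show (-R:ℝ) ≤ 0 by linarith), Set.uIcc_of_le hRT]
      exact Icc_subset_Icc le_rfl hT.le
    have i2 : IntervalIntegrable h volume 0 T := by
      refine hint_h.mono_set ?_
      rw [Set.uIcc_of_le hT.le, Set.uIcc_of_le hRT]
      exact Icc_subset_Icc (show (-R:ℝ) ≤ 0 by linarith) le_rfl
    rw [← intervalIntegral.integral_add_adjacent_intervals i1 i2]
    have e1 : (∫ t in (-R)..(0:ℝ), h t) = 0 := by
      rw [intervalIntegral.integral_congr (g := fun _ => (0:ℝ))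
        (fun t ht => ?_), intervalIntegral.integral_zero]
      rw [Set.uIcc_of_le (by linarith : (-R:ℝ) ≤ 0)] at ht
      simp [hh, if_pos ht.2]
    have e2 : (∫ t in (0:ℝ)..T, h t) = T * M ^ p := by
      rw [intervalIntegral.integral_congr_ae (g := fun _ => M ^ p)
        (ae_of_all _ (fun t ht => ?_)), intervalIntegral.integral_const, sub_zero, smul_eq_mul]
      rw [Set.uIoc_of_le hT.le] at ht
      simp [hh, if_neg (not_le.mpr ht.1)]
    rw [e1, e2, zero_add]
  have hnn : (0:ℝ) ≤ ∫ t in (-R)..T, ‖d t‖ ^ p :=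
    intervalIntegral.integral_nonneg hRT (fun t _ => Real.rpow_nonneg (norm_nonneg _) p)
  calc (∫ t in (-R)..T, ‖d t‖ ^ p) ^ (1/p)
      ≤ (T * M ^ p) ^ (1/p) :=
        Real.rpow_le_rpow hnn (le_of_le_of_eq hmono hval) (by positivity)
    _ = T ^ (1/p) * M := by
        rw [Real.mul_rpow hT.le hMp, ← Real.rpow_mul hM, mul_one_div_cancel hp0.ne',
          Real.rpow_one]

lemma hasW1pOn_piece {R T p : ℝ} (hp : 1 ≤ p) (hR : 0 < R) (hT : 0 < T) (g : ℝ → Vec N)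
    (hg : ContinuousOn g (Icc 0 T)) :
    HasW1pOn (fun t => if t ≤ 0 then 0 else ∫ s in (0:ℝ)..t, g s)
      (fun t => if t ≤ 0 then 0 else g t) p (-R) T := by
  have hRT : (-R:ℝ) ≤ T := by linarith
  have hR0 : (-R:ℝ) ≤ 0 := by linarith
  obtain ⟨M, hM⟩ := isCompact_Icc.exists_bound_of_continuousOn hg
  set D : ℝ → Vec N := fun t => if t ≤ 0 then 0 else g t with hD
  have hb : ∀ t ∈ Icc (-R:ℝ) T, ‖D t‖ ≤ max M 0 := by
    intro t ht
    by_cases hle : t ≤ 0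
    · simp [hD, if_pos hle]
    · rw [hD]; simp only [if_neg hle]
      exact le_trans (hM t ⟨(not_le.mp hle).le, ht.2⟩) (le_max_left _ _)
  have hsm : AEStronglyMeasurable D (volume.restrict (Icc (-R) T)) := aesm_piece hR hT hg
  haveI : IsFiniteMeasure (volume.restrict (Icc (-R:ℝ) T)) :=
    ⟨by rw [Measure.restrict_apply_univ]; exact measure_Icc_lt_top⟩
  have hmem : MemLp D (ENNReal.ofReal p) (volume.restrict (Icc (-R) T)) :=
    MemLp.of_bound hsm (max M 0)
      ((ae_restrict_iff' measurableSet_Icc).mpr (ae_of_all _ hb))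
  have hint : IntervalIntegrable D volume (-R) T := by
    have h1 : MemLp D 1 (volume.restrict (Icc (-R) T)) :=
      hmem.mono_exponent (by
        rw [← ENNReal.ofReal_one]; exact ENNReal.ofReal_le_ofReal hp)
    have h2 : IntegrableOn D (Icc (-R) T) volume := memLp_one_iff_integrable.mp h1
    exact (h2.mono_set (Set.uIcc_of_le hRT).le).intervalIntegrable
  refine ⟨?_, hint, hmem⟩
  intro t ht
  show (if t ≤ 0 then (0:Vec N) else ∫ s in (0:ℝ)..t, g s) =
    (if (-R:ℝ) ≤ 0 then (0:Vec N) else ∫ s in (0:ℝ)..(-R), g s) + ∫ s in (-R)..t, D s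
  by_cases htle : t ≤ 0
  · rw [if_pos htle, if_pos hR0]
    rw [intervalIntegral.integral_congr (g := fun _ => (0:Vec N)) (fun s hs => ?_),
      intervalIntegral.integral_zero, add_zero]
    rw [Set.uIcc_of_le (le_trans ht.1 (le_refl t) : (-R:ℝ) ≤ t)] at hs
    exact if_pos (le_trans hs.2 htle)
  · rw [if_neg htle, if_pos hR0, zero_add]
    have hto : (0:ℝ) ≤ t := (not_le.mp htle).le
    have i1 : IntervalIntegrable D volume (-R) 0 := by
      refine hint.mono_set ?_
      rw [Set.uIcc_of_le hR0, Set.uIcc_of_le hRT]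
      exact Icc_subset_Icc le_rfl hT.le
    have i2 : IntervalIntegrable D volume 0 t := by
      refine hint.mono_set ?_
      rw [Set.uIcc_of_le hto, Set.uIcc_of_le hRT]
      exact Icc_subset_Icc hR0 ht.2
    rw [← intervalIntegral.integral_add_adjacent_intervals i1 i2]
    have e1 : (∫ s in (-R)..(0:ℝ), D s) = 0 := by
      rw [intervalIntegral.integral_congr (g := fun _ => (0:Vec N)) (fun s hs => ?_),
        intervalIntegral.integral_zero]
      rw [Set.uIcc_of_le hR0] at hs
      exact if_pos hs.2
    have e2 : (∫ s in (0:ℝ)..t, D s) = ∫ s in (0:ℝ)..t, g s := by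
      refine intervalIntegral.integral_congr_ae (ae_of_all _ (fun s hs => ?_))
      rw [Set.uIoc_of_le hto] at hs
      exact if_neg (not_le.mpr hs.1)
    rw [e1, e2, zero_add]

end Helpers2
lemma ucont_fderiv {N : ℕ} {f : Vec N × Vec N → Vec N} {K : Set (Vec N × Vec N)}
    (hK : IsCompact K) (hf : ContDiff ℝ 1 f) {ε : ℝ} (hε : 0 < ε) :
    ∃ δ > 0, δ ≤ 1 ∧ ∀ a b : Vec N × Vec N, b ∈ K → dist a b ≤ δ →
      ‖fderiv ℝ f a - fderiv ℝ f b‖ ≤ ε := by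
  have hK1 : IsCompact (Metric.cthickening 1 K) := hK.cthickening
  have huc := hK1.uniformContinuousOn_of_continuous
    ((hf.continuous_fderiv one_ne_zero).continuousOn)
  rw [Metric.uniformContinuousOn_iff_le] at huc
  obtain ⟨δ', hδ'pos, hδ'⟩ := huc ε hε
  refine ⟨min δ' 1, lt_min hδ'pos one_pos, min_le_right _ _, fun a b hb hab => ?_⟩
  have ha : a ∈ Metric.cthickening 1 K :=
    Metric.mem_cthickening_of_dist_le a b 1 K hb (le_trans hab (min_le_right _ _))
  have hb' : b ∈ Metric.cthickening 1 K := Metric.self_subset_cthickening K hb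
  have h := hδ' a ha b hb' (le_trans hab (min_le_left _ _))
  rwa [dist_eq_norm] at h
/-- for `f` of class `C^1` and fixed `r ∈ [0,R]`, the map
`𝒯(·,·,r) : C([−R,T],ℝ^N) × C([−R,0],ℝ^N) → W^{1,p}([−R,T],ℝ^N)` is continuously Fréchet
differentiable with derivative `A_{y,φ,r}`:
(i) `𝒯(y,φ,r)` and `A_{y,φ,r}(η,χ)` lie in `W^{1,p}([−R,T])`;
(ii) at every `(y0,φ0)` the little-o property of Fréchet differentiability holds;
(iii) the operator-norm estimate
`‖A_{y,φ,r} − A_{y0,φ0,r}‖ ≤ 2T^{1/p} sup_{t∈[0,T]} ‖Df(ρ(y,φ,r,t)) − Df(ρ(y0,φ0,r,t))‖`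
holds (expressed on each argument `(η,χ)` against the norm `‖η‖_C + ‖χ‖_C`);
(iv) `(y,φ) ↦ A_{y,φ,r}` is continuous in operator norm. -/
theorem stmt11 (N : ℕ) (hN : 1 ≤ N) (p : ℝ) (hp : 1 ≤ p) (R T : ℝ) (hR : 0 < R) (hT : 0 < T)
    (f : Vec N × Vec N → Vec N) (hf : ContDiff ℝ 1 f) (r : ℝ) (hr : r ∈ Set.Icc (0:ℝ) R) :
    -- (i) well-definedness
    (∀ y φ : ℝ → Vec N, ContinuousOn y (Set.Icc (-R) T) → ContinuousOn φ (Set.Icc (-R) 0) →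
      HasW1pOn (Tmap f y φ r) (Tderiv f y φ r) p (-R) T ∧
        ∀ η χ : ℝ → Vec N, ContinuousOn η (Set.Icc (-R) T) → ContinuousOn χ (Set.Icc (-R) 0) →
          HasW1pOn (Afun f y φ η χ r) (Afun' f y φ η χ r) p (-R) T) ∧
    -- (ii) Fréchet differentiability at every (y0, φ0), with derivative A
    (∀ y0 φ0 : ℝ → Vec N, ContinuousOn y0 (Set.Icc (-R) T) → ContinuousOn φ0 (Set.Icc (-R) 0) →
      ∀ ε > 0, ∃ δ > 0, ∀ η χ : ℝ → Vec N,
        ContinuousOn η (Set.Icc (-R) T) → ContinuousOn χ (Set.Icc (-R) 0) →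
        cNorm (-R) T η + cNorm (-R) 0 χ ≤ δ →
        wNorm p (-R) T
            (Tmap f (y0 + η) (φ0 + χ) r (-R) - Tmap f y0 φ0 r (-R) - Afun f y0 φ0 η χ r (-R))
            (fun t => Tderiv f (y0 + η) (φ0 + χ) r t - Tderiv f y0 φ0 r t -
              Afun' f y0 φ0 η χ r t) ≤
          ε * (cNorm (-R) T η + cNorm (-R) 0 χ)) ∧
    -- (iii) the operator-norm estimate
    (∀ y φ y0 φ0 : ℝ → Vec N,
      ContinuousOn y (Set.Icc (-R) T) → ContinuousOn φ (Set.Icc (-R) 0) →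
      ContinuousOn y0 (Set.Icc (-R) T) → ContinuousOn φ0 (Set.Icc (-R) 0) →
      ∀ η χ : ℝ → Vec N, ContinuousOn η (Set.Icc (-R) T) → ContinuousOn χ (Set.Icc (-R) 0) →
        wNorm p (-R) T (Afun f y φ η χ r (-R) - Afun f y0 φ0 η χ r (-R))
            (fun t => Afun' f y φ η χ r t - Afun' f y0 φ0 η χ r t) ≤
          2 * T ^ (1 / p) *
            sSup ((fun t => ‖fderiv ℝ f (rho y φ r t) - fderiv ℝ f (rho y0 φ0 r t)‖) ''
              Set.Icc (0:ℝ) T) *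
            (cNorm (-R) T η + cNorm (-R) 0 χ)) ∧
    -- (iv) continuity of the Fréchet derivative in operator norm
    (∀ y0 φ0 : ℝ → Vec N, ContinuousOn y0 (Set.Icc (-R) T) → ContinuousOn φ0 (Set.Icc (-R) 0) →
      ∀ ε > 0, ∃ δ > 0, ∀ y φ : ℝ → Vec N,
        ContinuousOn y (Set.Icc (-R) T) → ContinuousOn φ (Set.Icc (-R) 0) →
        cNorm (-R) T (fun t => y t - y0 t) + cNorm (-R) 0 (fun t => φ t - φ0 t) ≤ δ →
        ∀ η χ : ℝ → Vec N, ContinuousOn η (Set.Icc (-R) T) → ContinuousOn χ (Set.Icc (-R) 0) →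
          wNorm p (-R) T (Afun f y φ η χ r (-R) - Afun f y0 φ0 η χ r (-R))
              (fun t => Afun' f y φ η χ r t - Afun' f y0 φ0 η χ r t) ≤
            ε * (cNorm (-R) T η + cNorm (-R) 0 χ)) := by
  
  have hr0 : (0:ℝ) ≤ r := hr.1
  have hR0 : (-R:ℝ) ≤ 0 := by linarith
  have hRT : (-R:ℝ) ≤ T := by linarith
  have hTp : (0:ℝ) < T ^ (1/p) := Real.rpow_pos_of_pos hT _
  have hdf : Continuous (fderiv ℝ f) := hf.continuous_fderiv one_ne_zero
  refine ⟨?_, ?_, ?_, ?_⟩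
  -- (i)
  · intro y φ hy hφ
    have hρ := continuousOn_rho hR hT hr hy hφ
    constructor
    · exact hasW1pOn_piece hp hR hT _ (hf.continuous.comp_continuousOn hρ)
    · intro η χ hη hχ
      have hρη := continuousOn_rho hR hT hr hη hχ
      exact hasW1pOn_piece hp hR hT _ ((hdf.comp_continuousOn hρ).clm_apply hρη)
  -- (ii)
  · intro y0 φ0 hy0 hφ0 ε hε
    have hρ0 := continuousOn_rho hR hT hr hy0 hφ0
    have hεT : 0 < ε / T ^ (1/p) := div_pos hε hTp
    obtain ⟨δ, hδpos, hδ1, hδ⟩ :=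
      ucont_fderiv (isCompact_Icc.image_of_continuousOn hρ0) hf hεT
    refine ⟨δ, hδpos, ?_⟩
    intro η χ hη hχ hsmall
    have hρη := continuousOn_rho hR hT hr hη hχ
    set C := cNorm (-R) T η + cNorm (-R) 0 χ with hCdef
    have hC0 : 0 ≤ C := add_nonneg (cNorm_nonneg hRT hη) (cNorm_nonneg hR0 hχ)
    refine le_trans (wNorm_le hp hR hT (mul_nonneg hεT.le hC0) ?_ ?_ ?_ ?_) ?_
    · simp [Tmap, Afun, hR0]
    · intro t ht; simp [Tderiv, Afun', ht]
    · have hρ1 := continuousOn_rho hR hT hr (hy0.add hη) (hφ0.add hχ)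
      exact ((aesm_piece hR hT (hf.continuous.comp_continuousOn hρ1)).sub
        (aesm_piece hR hT (hf.continuous.comp_continuousOn hρ0))).sub
        (aesm_piece hR hT ((hdf.comp_continuousOn hρ0).clm_apply hρη))
    · intro t ht
      have hnt : ¬ t ≤ 0 := not_le.mpr ht.1
      have htI : t ∈ Icc (0:ℝ) T := ⟨ht.1.le, ht.2⟩
      show ‖Tderiv f (y0 + η) (φ0 + χ) r t - Tderiv f y0 φ0 r t -
        Afun' f y0 φ0 η χ r t‖ ≤ ε / T ^ (1/p) * C
      simp only [Tderiv, Afun', if_neg hnt]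
      have hσ : ‖rho η χ r t‖ ≤ C := norm_rho_le hR hT hr hη hχ htI
      have hσδ : ‖rho η χ r t‖ ≤ δ := le_trans hσ hsmall
      set x := rho y0 φ0 r t with hxdef
      set σ := rho η χ r t with hσdef
      have e1 : ((y0 + η + prolong (φ0 + χ)) t, (y0 + η + prolong (φ0 + χ)) (t - r)) =
          x + σ := rho_add y0 φ0 η χ r t
      have e2 : ((y0 + prolong φ0) t, (y0 + prolong φ0) (t - r)) = x := rfl
      rw [e1, e2]
      have hball : ∀ z ∈ Metric.closedBall x δ,
          ‖fderiv ℝ f z - fderiv ℝ f x‖ ≤ ε / T ^ (1/p) :=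
        fun z hz => hδ z x ⟨t, htI, rfl⟩ (Metric.mem_closedBall.mp hz)
      have hmv := (convex_closedBall x δ).norm_image_sub_le_of_norm_fderiv_le'
        (fun z _ => (hf.differentiable one_ne_zero).differentiableAt) hball
        (Metric.mem_closedBall_self hδpos.le)
        (show x + σ ∈ Metric.closedBall x δ by
          rw [Metric.mem_closedBall, dist_eq_norm, add_sub_cancel_left]; exact hσδ)
      rw [add_sub_cancel_left] at hmv
      exact le_trans hmv (mul_le_mul_of_nonneg_left hσ hεT.le)
    · have hne : T ^ (1/p) ≠ 0 := ne_of_gt hTp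
      have heq : T ^ (1/p) * (ε / T ^ (1/p) * C) = ε * C := by field_simp
      exact le_of_eq heq
  -- (iii)
  · intro y φ y0 φ0 hy hφ hy0 hφ0 η χ hη hχ
    have hρ := continuousOn_rho hR hT hr hy hφ
    have hρ0 := continuousOn_rho hR hT hr hy0 hφ0
    have hρη := continuousOn_rho hR hT hr hη hχ
    set S := sSup ((fun t => ‖fderiv ℝ f (rho y φ r t) - fderiv ℝ f (rho y0 φ0 r t)‖) ''
      Icc (0:ℝ) T) with hSdef
    set C := cNorm (-R) T η + cNorm (-R) 0 χ with hCdef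
    have hC0 : 0 ≤ C := add_nonneg (cNorm_nonneg hRT hη) (cNorm_nonneg hR0 hχ)
    have hcont : ContinuousOn
        (fun t => ‖fderiv ℝ f (rho y φ r t) - fderiv ℝ f (rho y0 φ0 r t)‖) (Icc 0 T) :=
      ((hdf.comp_continuousOn hρ).sub (hdf.comp_continuousOn hρ0)).norm
    have hS : ∀ t ∈ Icc (0:ℝ) T,
        ‖fderiv ℝ f (rho y φ r t) - fderiv ℝ f (rho y0 φ0 r t)‖ ≤ S :=
      fun t ht => le_csSup (isCompact_Icc.bddAbove_image hcont) ⟨t, ht, rfl⟩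
    have hS0 : (0:ℝ) ≤ S := le_trans (norm_nonneg _) (hS 0 ⟨le_rfl, hT.le⟩)
    refine le_trans (wNorm_le hp hR hT (mul_nonneg hS0 hC0) ?_ ?_ ?_ ?_) ?_
    · simp [Afun, hR0]
    · intro t ht; simp [Afun', ht]
    · exact (aesm_piece hR hT ((hdf.comp_continuousOn hρ).clm_apply hρη)).sub
        (aesm_piece hR hT ((hdf.comp_continuousOn hρ0).clm_apply hρη))
    · intro t ht
      have hnt : ¬ t ≤ 0 := not_le.mpr ht.1
      have htI : t ∈ Icc (0:ℝ) T := ⟨ht.1.le, ht.2⟩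
      show ‖Afun' f y φ η χ r t - Afun' f y0 φ0 η χ r t‖ ≤ S * C
      simp only [Afun', if_neg hnt]
      rw [← ContinuousLinearMap.sub_apply]
      refine le_trans (ContinuousLinearMap.le_opNorm _ _) ?_
      exact mul_le_mul (hS t htI) (norm_rho_le hR hT hr hη hχ htI) (norm_nonneg _) hS0
    · nlinarith [Real.rpow_nonneg hT.le (1/p), mul_nonneg hS0 hC0,
        mul_nonneg (mul_nonneg (Real.rpow_nonneg hT.le (1/p)) hS0) hC0]
  -- (iv)
  · intro y0 φ0 hy0 hφ0 ε hε
    have hρ0 := continuousOn_rho hR hT hr hy0 hφ0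
    have hεT : 0 < ε / T ^ (1/p) := div_pos hε hTp
    obtain ⟨δ, hδpos, hδ1, hδ⟩ :=
      ucont_fderiv (isCompact_Icc.image_of_continuousOn hρ0) hf hεT
    refine ⟨δ, hδpos, ?_⟩
    intro y φ hy hφ hclose η χ hη hχ
    have hρ := continuousOn_rho hR hT hr hy hφ
    have hρη := continuousOn_rho hR hT hr hη hχ
    set C := cNorm (-R) T η + cNorm (-R) 0 χ with hCdef
    have hC0 : 0 ≤ C := add_nonneg (cNorm_nonneg hRT hη) (cNorm_nonneg hR0 hχ)
    refine le_trans (wNorm_le hp hR hT (mul_nonneg hεT.le hC0) ?_ ?_ ?_ ?_) ?_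
    · simp [Afun, hR0]
    · intro t ht; simp [Afun', ht]
    · exact (aesm_piece hR hT ((hdf.comp_continuousOn hρ).clm_apply hρη)).sub
        (aesm_piece hR hT ((hdf.comp_continuousOn hρ0).clm_apply hρη))
    · intro t ht
      have hnt : ¬ t ≤ 0 := not_le.mpr ht.1
      have htI : t ∈ Icc (0:ℝ) T := ⟨ht.1.le, ht.2⟩
      show ‖Afun' f y φ η χ r t - Afun' f y0 φ0 η χ r t‖ ≤ ε / T ^ (1/p) * C
      simp only [Afun', if_neg hnt]
      rw [← ContinuousLinearMap.sub_apply]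
      refine le_trans (ContinuousLinearMap.le_opNorm _ _) ?_
      have hdist : dist (rho y φ r t) (rho y0 φ0 r t) ≤ δ := by
        rw [dist_eq_norm, rho_sub]
        exact le_trans (norm_rho_le hR hT hr (hy.sub hy0) (hφ.sub hφ0) htI) hclose
      exact mul_le_mul (hδ _ _ ⟨t, htI, rfl⟩ hdist) (norm_rho_le hR hT hr hη hχ htI)
        (norm_nonneg _) hεT.le
    · have hne : T ^ (1/p) ≠ 0 := ne_of_gt hTp
      have heq : T ^ (1/p) * (ε / T ^ (1/p) * C) = ε * C := by field_simp
      exact le_of_eq heq
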